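/- arXiv:math/0110042 — 4 statements merged into one kernel-verified Lean document; each statement's English description precedes it below -/
import Mathlib

section
/- Let p, q'' ∈ ℤ and n ≥ 1, and let H = (ℤ × ℤ)/⟨(p, q'')⟩ be the quotient of ℤ² by the subgroup generated by (p, q''). Then there exists a group homomorphism ω : H → ℤ_n sending the class of (0,1) to 1 ∈ ℤ_n if and only if gcd(p, n) divides q''. -/
/-- Existence criterion for an `n`-fold strongly-cyclic branched covering of a
`(1,1)`-knot in `L(p,q)`: there is a monodromy
`ω : H₁ = (ℤ × ℤ)/⟨(p, q'')⟩ → ℤ_n` sending the meridian class (the class of `(0,1)`)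
to `1` if and only if `gcd(p, n)` divides `q''`. -/
theorem stmt1 (p q'' : ℤ) (n : ℕ) (hn : 1 ≤ n) :
    (∃ ω : (ℤ × ℤ) ⧸ AddSubgroup.zmultiples ((p, q'') : ℤ × ℤ) →+ ZMod n,
      ω (QuotientAddGroup.mk ((0, 1) : ℤ × ℤ)) = 1) ↔ (Int.gcd p n : ℤ) ∣ q'' := by
  haveI : NeZero n := ⟨by omega⟩
  constructor
  · rintro ⟨ω, hω⟩
    set a : ZMod n := ω (QuotientAddGroup.mk ((1, 0) : ℤ × ℤ)) with ha
    have hmem : (p • ((1, 0) : ℤ × ℤ) + q'' • ((0, 1) : ℤ × ℤ)) ∈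
        AddSubgroup.zmultiples ((p, q'') : ℤ × ℤ) := by
      have : (p • ((1, 0) : ℤ × ℤ) + q'' • ((0, 1) : ℤ × ℤ)) = ((p, q'') : ℤ × ℤ) := by
        simp [Prod.ext_iff]
      rw [this]; exact AddSubgroup.mem_zmultiples _
    have hker : ω (QuotientAddGroup.mk (p • ((1, 0) : ℤ × ℤ) + q'' • ((0, 1) : ℤ × ℤ))) = 0 := by
      rw [(QuotientAddGroup.eq_zero_iff _).2 hmem, map_zero]
    have key : (p : ZMod n) * a + (q'' : ZMod n) = 0 := by
      rw [QuotientAddGroup.mk_add, map_add, QuotientAddGroup.mk_zsmul,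
        QuotientAddGroup.mk_zsmul, map_zsmul, map_zsmul, hω, ← ha] at hker
      simpa [zsmul_eq_mul] using hker
    -- lift a to an integer
    obtain ⟨a₀, ha₀⟩ : ∃ a₀ : ℤ, (a₀ : ZMod n) = a := ⟨(a.val : ℤ), by simp⟩
    have hn' : ((p * a₀ + q'' : ℤ) : ZMod n) = 0 := by push_cast [ha₀]; exact key
    have hdvd : (n : ℤ) ∣ p * a₀ + q'' := (ZMod.intCast_zmod_eq_zero_iff_dvd _ n).1 hn'
    have hg : (Int.gcd p n : ℤ) ∣ p * a₀ + q'' := dvd_trans (Int.gcd_dvd_right p n) hdvd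
    have hp : (Int.gcd p n : ℤ) ∣ p * a₀ := Dvd.dvd.mul_right (Int.gcd_dvd_left p n) a₀
    have := dvd_sub hg hp
    simpa using this
  · rintro ⟨t, ht⟩
    have hbez : (Int.gcd p n : ℤ) = p * Int.gcdA p n + n * Int.gcdB p n := Int.gcd_eq_gcd_ab p n
    set u := Int.gcdA p n
    set v := Int.gcdB p n
    set a : ZMod n := ((-(u * t) : ℤ) : ZMod n) with ha
    have hpa : (p : ZMod n) * a + (q'' : ZMod n) = 0 := by
      have : ((p * (-(u * t)) + q'' : ℤ) : ZMod n) = 0 := by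
        rw [ZMod.intCast_zmod_eq_zero_iff_dvd]
        refine ⟨v * t, ?_⟩
        rw [ht, hbez]; ring
      push_cast at this
      rw [ha]; push_cast; linear_combination this
    let φ : ℤ × ℤ →+ ZMod n :=
      AddMonoidHom.mk' (fun z => (z.1 : ZMod n) * a + (z.2 : ZMod n))
        (by intro x y; simp [Prod.fst_add, Prod.snd_add]; ring)
    have hker : AddSubgroup.zmultiples ((p, q'') : ℤ × ℤ) ≤ φ.ker := by
      rintro z hz
      obtain ⟨k, rfl⟩ := AddSubgroup.mem_zmultiples_iff.1 hz
      rw [AddMonoidHom.mem_ker, map_zsmul]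
      have : φ ((p, q'') : ℤ × ℤ) = 0 := hpa
      rw [this, smul_zero]
    refine ⟨QuotientAddGroup.lift _ φ hker, ?_⟩
    show φ ((0, 1) : ℤ × ℤ) = 1
    simp [φ]
end

section
/- Let F₃ be the free group on three generators a, b, c, and define endomorphisms of F₃ by: d_α : a ↦ a, b ↦ ab, c ↦ ac; d_β : a ↦ b⁻¹a, b ↦ b, c ↦ c; e_γ : a ↦ ac, b ↦ b, c ↦ c. Then for all natural numbers h and k, the composite endomorphism φ = d_α^h ∘ e_γ^k ∘ d_β^{1+k} ∘ d_α (applying d_α first) satisfies φ(b) = (b⁻¹a^{−h})^{1+k} · a · (a^h c)^k · a^h · b. -/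
namespace Stmt5

/-- Generators `a = ᾱ`, `b = β̄`, `c = γ̄` of the free group `F₃`. -/
def a : FreeGroup (Fin 3) := FreeGroup.of 0
def b : FreeGroup (Fin 3) := FreeGroup.of 1
def c : FreeGroup (Fin 3) := FreeGroup.of 2

/-- The endomorphism `d_α : a ↦ a, b ↦ ab, c ↦ ac`. -/
def dAlpha : Monoid.End (FreeGroup (Fin 3)) := FreeGroup.lift ![a, a * b, a * c]
/-- The endomorphism `d_β : a ↦ b⁻¹a, b ↦ b, c ↦ c`. -/
def dBeta : Monoid.End (FreeGroup (Fin 3)) := FreeGroup.lift ![b⁻¹ * a, b, c]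
/-- The endomorphism `e_γ = d_γ⁻¹ : a ↦ ac, b ↦ b, c ↦ c`. -/
def eGamma : Monoid.End (FreeGroup (Fin 3)) := FreeGroup.lift ![a * c, b, c]

lemma end_mul_apply (f g : Monoid.End (FreeGroup (Fin 3))) (x : FreeGroup (Fin 3)) :
    (f * g) x = f (g x) := rfl

lemma dA_a : dAlpha a = a := by rw [dAlpha, a]; exact FreeGroup.lift_apply_of
lemma dA_b : dAlpha b = a * b := by rw [dAlpha, b]; exact FreeGroup.lift_apply_of
lemma dA_c : dAlpha c = a * c := by rw [dAlpha, c]; exact FreeGroup.lift_apply_of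
lemma dB_a : dBeta a = b⁻¹ * a := by rw [dBeta, a]; exact FreeGroup.lift_apply_of
lemma dB_b : dBeta b = b := by rw [dBeta, b]; exact FreeGroup.lift_apply_of
lemma eG_a : eGamma a = a * c := by rw [eGamma, a]; exact FreeGroup.lift_apply_of
lemma eG_b : eGamma b = b := by rw [eGamma, b]; exact FreeGroup.lift_apply_of
lemma eG_c : eGamma c = c := by rw [eGamma, c]; exact FreeGroup.lift_apply_of

lemma dAn_a (h : ℕ) : (dAlpha ^ h) a = a := by
  induction h with
  | zero => rfl
  | succ n ih => rw [pow_succ, end_mul_apply, dA_a, ih]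

lemma dAn_b (h : ℕ) : (dAlpha ^ h) b = a ^ h * b := by
  induction h with
  | zero => simp
  | succ n ih => rw [pow_succ, end_mul_apply, dA_b, map_mul, dAn_a, ih]; group

lemma dAn_c (h : ℕ) : (dAlpha ^ h) c = a ^ h * c := by
  induction h with
  | zero => simp
  | succ n ih => rw [pow_succ, end_mul_apply, dA_c, map_mul, dAn_a, ih]; group

lemma dBn_b (n : ℕ) : (dBeta ^ n) b = b := by
  induction n with
  | zero => rfl
  | succ n ih => rw [pow_succ, end_mul_apply, dB_b, ih]

lemma dBn_a (n : ℕ) : (dBeta ^ n) a = (b⁻¹) ^ n * a := by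
  induction n with
  | zero => simp
  | succ n ih => rw [pow_succ, end_mul_apply, dB_a, map_mul, map_inv, dBn_b, ih]; group

lemma eGn_b (k : ℕ) : (eGamma ^ k) b = b := by
  induction k with
  | zero => rfl
  | succ n ih => rw [pow_succ, end_mul_apply, eG_b, ih]

lemma eGn_c (k : ℕ) : (eGamma ^ k) c = c := by
  induction k with
  | zero => rfl
  | succ n ih => rw [pow_succ, end_mul_apply, eG_c, ih]

lemma eGn_a (k : ℕ) : (eGamma ^ k) a = a * c ^ k := by
  induction k with
  | zero => simp
  | succ n ih => rw [pow_succ, end_mul_apply, eG_a, map_mul, eGn_c, ih]; group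

/-- For `φ = d_α^h ∘ e_γ^k ∘ d_β^{1+k} ∘ d_α` (applying `d_α` first),
`φ(b) = (b⁻¹a^{−h})^{1+k} · a · (a^h c)^k · a^h · b`. -/
theorem stmt5 (h k : ℕ) :
    (dAlpha ^ h * eGamma ^ k * dBeta ^ (1 + k) * dAlpha) b =
      (b⁻¹ * (a ^ h)⁻¹) ^ (1 + k) * a * (a ^ h * c) ^ k * a ^ h * b := by
  simp only [end_mul_apply, dA_b, map_mul, map_pow, map_inv, dBn_a, dBn_b,
    eGn_a, eGn_b, eGn_c, dAn_a, dAn_b, dAn_c, mul_inv_rev]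
  group

end Stmt5
end

section
/- Let n ≥ 1 and h, k ≥ 1, and let F_n be the free group on generators x_i indexed by i ∈ ℤ_n. Let W = (∏_{j=0}^{hk} x_{1−jk}) · (∏_{i=0}^{k−1} ∏_{l=0}^{h−1} x_{2+i−(h(k−i)−l)k}^{−1}) and w = (∏_{j=0}^{h(k−1)} x_{1−jk}) · (∏_{i=0}^{k−2} ∏_{l=1}^{h} x_{2+i−(h(k−1−i)+1−l)k}^{−1}), with all subscripts reduced mod n. Then the cyclically presented groups G_n(W) and G_n(w) are isomorphic. -/
namespace Stmt11

/-- The shift automorphism `θ_n` of the free group on generators indexed by `ZMod n`,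
determined by `x_i ↦ x_{i+1}`. -/
def theta (n : ℕ) : Monoid.End (FreeGroup (ZMod n)) :=
  FreeGroup.lift (fun i => FreeGroup.of (i + 1))

/-- The set of relators `{w, θ_n(w), …, θ_n^{n-1}(w)}` of the cyclic presentation `G_n(w)`. -/
def cyclicRels (n : ℕ) (w : FreeGroup (ZMod n)) : Set (FreeGroup (ZMod n)) :=
  { r | ∃ j : ℕ, j < n ∧ r = (theta n ^ j) w }

/-- The cyclically presented group `G_n(w)`. -/
abbrev G (n : ℕ) (w : FreeGroup (ZMod n)) : Type :=
  PresentedGroup (cyclicRels n w)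

/-- The generator `x_m` of `F_n`, with subscript `m ∈ ℤ` reduced mod `n`. -/
def gen (n : ℕ) (m : ℤ) : FreeGroup (ZMod n) := FreeGroup.of (m : ZMod n)

/-- `W = (∏_{j=0}^{hk} x_{1−jk}) · (∏_{i=0}^{k−1} ∏_{l=0}^{h−1} x_{2+i−(h(k−i)−l)k}⁻¹)`,
the products being taken in order. -/
def bigW (n h k : ℕ) : FreeGroup (ZMod n) :=
  ((List.range (h * k + 1)).map (fun j => gen n (1 - (j : ℤ) * k))).prod *
    ((List.range k).map (fun i =>
      (((List.range h).map (fun l =>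
        (gen n (2 + (i : ℤ) - ((h : ℤ) * ((k : ℤ) - i) - l) * k))⁻¹)).prod))).prod

/-- `w = (∏_{j=0}^{h(k−1)} x_{1−jk}) · (∏_{i=0}^{k−2} ∏_{l=1}^{h} x_{2+i−(h(k−1−i)+1−l)k}⁻¹)`,
the products being taken in order. -/
def smallw (n h k : ℕ) : FreeGroup (ZMod n) :=
  ((List.range (h * (k - 1) + 1)).map (fun j => gen n (1 - (j : ℤ) * k))).prod *
    ((List.range (k - 1)).map (fun i =>
      (((List.range h).map (fun l =>
        (gen n (2 + (i : ℤ) -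
          ((h : ℤ) * ((k : ℤ) - 1 - i) + 1 - ((l : ℤ) + 1)) * k))⁻¹)).prod))).prod

/-! ### Auxiliary lemmas -/


lemma map_coe {α : Type*} (f : ℤ → α) (l : List ℕ) :
    List.map f (do let a ← l; pure ((a : ℤ))) = List.map (fun a : ℕ => f a) l := by
  induction l with
  | nil => rfl
  | cons x xs ih => simpa using ih

/-- A coercion-free form of `bigW`. -/
def bigW' (n h k : ℕ) : FreeGroup (ZMod n) :=
  ((List.range (h * k + 1)).map (fun j : ℕ => gen n (1 - (j : ℤ) * k))).prod *
    ((List.range k).map (fun i : ℕ =>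
      (((List.range h).map (fun l : ℕ =>
        (gen n (2 + (i : ℤ) - ((h : ℤ) * ((k : ℤ) - i) - l) * k))⁻¹)).prod))).prod

/-- A coercion-free form of `smallw`. -/
def smallw' (n h k : ℕ) : FreeGroup (ZMod n) :=
  ((List.range (h * (k - 1) + 1)).map (fun j : ℕ => gen n (1 - (j : ℤ) * k))).prod *
    ((List.range (k - 1)).map (fun i : ℕ =>
      (((List.range h).map (fun l : ℕ =>
        (gen n (2 + (i : ℤ) -
          ((h : ℤ) * ((k : ℤ) - 1 - i) + 1 - ((l : ℤ) + 1)) * k))⁻¹)).prod))).prod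

lemma bigW_norm (n h k : ℕ) : bigW n h k = bigW' n h k := by
  rw [bigW, bigW', map_coe, map_coe]
  congr 2
  apply List.map_congr_left
  intro i _
  rw [map_coe]

lemma smallw_norm (n h k : ℕ) : smallw n h k = smallw' n h k := by
  rw [smallw, smallw', map_coe, map_coe]
  congr 2
  apply List.map_congr_left
  intro i _
  rw [map_coe]

lemma theta_of (n : ℕ) (a : ZMod n) : theta n (FreeGroup.of a) = FreeGroup.of (a + 1) := by
  rw [theta]
  exact FreeGroup.lift_apply_of

lemma theta_pow_of (n : ℕ) (s : ℕ) (a : ZMod n) :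
    (theta n ^ s) (FreeGroup.of a) = FreeGroup.of (a + s) := by
  induction s generalizing a with
  | zero => simp
  | succ s ih =>
    have h1 : (theta n ^ (s+1)) (FreeGroup.of a) = (theta n ^ s) (theta n (FreeGroup.of a)) := by
      rw [pow_succ]; rfl
    rw [h1, theta_of, ih]
    congr 1
    push_cast
    ring

lemma theta_pow_gen (n s : ℕ) (m : ℤ) : (theta n ^ s) (gen n m) = gen n (m + s) := by
  rw [gen, theta_pow_of, gen]
  congr 1
  push_cast
  ring

lemma theta_pow_n (n : ℕ) : (theta n) ^ n = 1 := by
  have h : ((theta n)^n : FreeGroup (ZMod n) →* FreeGroup (ZMod n)) = MonoidHom.id _ := by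
    apply FreeGroup.ext_hom
    intro a
    show (theta n ^ n) (FreeGroup.of a) = FreeGroup.of a
    rw [theta_pow_of]
    simp
  exact h

lemma theta_reduce (n s : ℕ) (x : FreeGroup (ZMod n)) :
    (theta n ^ s) x = (theta n ^ (s % n)) x := by
  rw [pow_eq_pow_mod s (theta_pow_n n)]

lemma prod_inv_rev {H : Type*} [Group H] (f : ℕ → H) (m : ℕ) :
    (((List.range m).map f).prod)⁻¹
      = ((List.range m).map (fun l => (f (m - 1 - l))⁻¹)).prod := by
  induction m with
  | zero => simp
  | succ m ih =>
    conv_rhs => rw [List.range_succ_eq_map]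
    rw [List.range_succ, List.map_append, List.prod_append, mul_inv_rev, ih]
    simp only [List.map_cons, List.map_nil, List.prod_cons, List.prod_nil, mul_one,
      List.map_map, Nat.add_sub_cancel, Nat.sub_zero]
    congr 1
    refine congrArg List.prod (List.map_congr_left fun a _ => ?_)
    simp only [Function.comp]
    congr 2
    omega

/-- The first `h` letters of `W`. -/
def Aword (n h k : ℕ) : FreeGroup (ZMod n) :=
  ((List.range h).map (fun j : ℕ => gen n (1 - (j : ℤ) * k))).prod

/-- The middle of `W`, obtained by removing the first `h` and last `h` letters. -/
def Bword (n h k : ℕ) : FreeGroup (ZMod n) :=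
  ((List.range (h * (k - 1) + 1)).map (fun j : ℕ => gen n (1 - ((h : ℤ) + j) * k))).prod *
    ((List.range (k - 1)).map (fun i : ℕ =>
      (((List.range h).map (fun l : ℕ =>
        (gen n (2 + (i : ℤ) - ((h : ℤ) * ((k : ℤ) - i) - l) * k))⁻¹)).prod))).prod

lemma bigW_eq (n h k : ℕ) (hh : 1 ≤ h) (hk : 1 ≤ k) :
    bigW n h k = Aword n h k * Bword n h k * (Aword n h k)⁻¹ := by
  rw [bigW_norm]
  obtain ⟨k', rfl⟩ : ∃ k', k = k' + 1 := ⟨k - 1, by omega⟩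
  have h1 : h * (k' + 1) + 1 = h + (h * ((k' + 1) - 1) + 1) := by
    simp [Nat.mul_succ]
    omega
  rw [bigW', h1, List.range_add, List.map_append, List.prod_append]
  conv_lhs => rw [show List.range (k' + 1) = List.range k' ++ [k'] from List.range_succ (n := k')]
  rw [List.map_append, List.prod_append]
  have hC : (([k']).map (fun i : ℕ =>
      (((List.range h).map (fun l : ℕ =>
        (gen n (2 + (i : ℤ) - ((h : ℤ) * (((k' + 1 : ℕ) : ℤ) - i) - l) * ((k' + 1 : ℕ) : ℤ)))⁻¹)).prod))).prod
      = (Aword n h (k' + 1))⁻¹ := by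
    rw [Aword, prod_inv_rev (fun j : ℕ => gen n (1 - (j : ℤ) * ((k' + 1 : ℕ) : ℤ))) h]
    simp only [List.map_singleton, List.prod_singleton]
    congr 1
    apply List.map_congr_left
    intro l hl
    rw [List.mem_range] at hl
    have c2 : ((h - 1 - l : ℕ) : ℤ) = (h : ℤ) - 1 - l := by omega
    refine congrArg (·⁻¹) (congrArg (gen n) ?_)
    rw [c2]
    push_cast
    ring
  rw [hC, Bword]
  have hA : (List.map (fun j : ℕ => gen n (1 - (j : ℤ) * ((k' + 1 : ℕ) : ℤ))) (List.range h)).prod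
      = Aword n h (k' + 1) := rfl
  rw [hA]
  have hB1 : (List.map (fun j : ℕ => gen n (1 - (j : ℤ) * ((k' + 1 : ℕ) : ℤ)))
      (List.map (fun x => h + x) (List.range (h * ((k' + 1) - 1) + 1)))).prod
      = ((List.range (h * ((k' + 1) - 1) + 1)).map
          (fun j : ℕ => gen n (1 - ((h : ℤ) + j) * ((k' + 1 : ℕ) : ℤ)))).prod := by
    rw [List.map_map]
    refine congrArg List.prod (List.map_congr_left fun a _ => ?_)
    simp only [Function.comp]
    refine congrArg (gen n) ?_
    push_cast
    ring
  rw [hB1]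
  simp only [Nat.add_sub_cancel]
  group

lemma smallw_eq (n h k : ℕ) : smallw n h k = (theta n ^ (h * k)) (Bword n h k) := by
  rw [smallw_norm]
  rw [Bword, smallw', map_mul, map_list_prod, map_list_prod, List.map_map, List.map_map]
  congr 1
  · congr 1
    apply List.map_congr_left
    intro a _
    simp only [Function.comp]
    rw [theta_pow_gen]
    refine congrArg (gen n) ?_
    push_cast
    ring
  · congr 1
    apply List.map_congr_left
    intro i _
    simp only [Function.comp]
    rw [map_list_prod, List.map_map]
    congr 1
    apply List.map_congr_left
    intro l _
    simp only [Function.comp]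
    rw [map_inv, theta_pow_gen]
    refine congrArg (·⁻¹) (congrArg (gen n) ?_)
    push_cast
    ring

/-- The cyclically presented groups `G_n(W)` and `G_n(w)` are isomorphic. -/
theorem stmt11 (n h k : ℕ) (hn : 1 ≤ n) (hh : 1 ≤ h) (hk : 1 ≤ k) :
    Nonempty (G n (bigW n h k) ≃* G n (smallw n h k)) := by
  set s := h * k with hs
  set A := Aword n h k
  set B := Bword n h k
  have hWB : bigW n h k = A * B * A⁻¹ := bigW_eq n h k hh hk
  have hwB : smallw n h k = (theta n ^ s) B := smallw_eq n h k
  set u := n - s % n with hu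
  have hBu : B = (theta n ^ u) (smallw n h k) := by
    rw [hwB]
    have h1 : (theta n ^ u) ((theta n ^ s) B) = (theta n ^ (u + s)) B := by
      rw [pow_add]; rfl
    rw [h1, theta_reduce]
    have hmod : (u + s) % n = 0 := by
      have h1 := Nat.div_add_mod s n
      have h2 : s % n < n := Nat.mod_lt _ hn
      have h3 : n * (s / n + 1) = n * (s / n) + n := by ring
      have h4 : u + s = n * (s / n + 1) := by omega
      rw [h4]
      exact Nat.mul_mod_right _ _
    rw [hmod, pow_zero]
    rfl
  have key : Subgroup.normalClosure (cyclicRels n (bigW n h k))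
      = Subgroup.normalClosure (cyclicRels n (smallw n h k)) := by
    apply le_antisymm
    · apply Subgroup.normalClosure_le_normal
      rintro r ⟨j, hj, rfl⟩
      have expand : (theta n ^ j) (bigW n h k)
          = (theta n ^ j) A * (theta n ^ j) B * ((theta n ^ j) A)⁻¹ := by
        rw [hWB, map_mul, map_mul, map_inv]
      rw [expand]
      apply Subgroup.Normal.conj_mem (Subgroup.normalClosure_normal)
      have hX : (theta n ^ j) B = (theta n ^ ((j + u) % n)) (smallw n h k) := by
        rw [hBu]
        have h1 : (theta n ^ j) ((theta n ^ u) (smallw n h k))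
            = (theta n ^ (j + u)) (smallw n h k) := by rw [pow_add]; rfl
        rw [h1, theta_reduce]
      rw [hX]
      exact Subgroup.subset_normalClosure ⟨(j + u) % n, Nat.mod_lt _ hn, rfl⟩
    · apply Subgroup.normalClosure_le_normal
      rintro r ⟨j, hj, rfl⟩
      have h1 : (theta n ^ j) (smallw n h k) = (theta n ^ ((j + s) % n)) B := by
        rw [hwB]
        have h2 : (theta n ^ j) ((theta n ^ s) B) = (theta n ^ (j + s)) B := by
          rw [pow_add]; rfl
        rw [h2, theta_reduce]
      set j' := (j + s) % n with hj'
      have expand : (theta n ^ j') B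
          = ((theta n ^ j') A)⁻¹ * ((theta n ^ j') (bigW n h k)) * (((theta n ^ j') A)⁻¹)⁻¹ := by
        rw [hWB, map_mul, map_mul, map_inv, inv_inv]
        group
      rw [h1, expand]
      apply Subgroup.Normal.conj_mem (Subgroup.normalClosure_normal)
      exact Subgroup.subset_normalClosure ⟨j', Nat.mod_lt _ hn, rfl⟩
  exact ⟨QuotientGroup.quotientMulEquivOfEq key⟩

end Stmt11
end

section
/- The abelianization of the cyclically presented group G₄(x₄x₁³x₂x₁⁻¹) (indices mod 4) is isomorphic to ℤ × ℤ_4. -/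
namespace Stmt14

/-- The shift automorphism `θ_n` of the free group on generators indexed by `ZMod n`,
determined by `x_i ↦ x_{i+1}`. -/
def theta (n : ℕ) : Monoid.End (FreeGroup (ZMod n)) :=
  FreeGroup.lift (fun i => FreeGroup.of (i + 1))

/-- The set of relators `{w, θ_n(w), …, θ_n^{n-1}(w)}` of the cyclic presentation `G_n(w)`. -/
def cyclicRels (n : ℕ) (w : FreeGroup (ZMod n)) : Set (FreeGroup (ZMod n)) :=
  { r | ∃ j : ℕ, j < n ∧ r = (theta n ^ j) w }

/-- The cyclically presented group `G_n(w)`. -/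
abbrev G (n : ℕ) (w : FreeGroup (ZMod n)) : Type :=
  PresentedGroup (cyclicRels n w)

/-- The generator `x_i` of the free group on `ZMod 4`. -/
def x (i : ZMod 4) : FreeGroup (ZMod 4) := FreeGroup.of i

namespace Aux

/- Pure commutative-group identities used below. -/
section Identities

variable {H : Type*} [CommGroup H] (a b c d : H)

private lemma mabel₁ : a * b ^ 3 * c * b⁻¹ = a * b ^ 2 * c :=
  Additive.ofMul.injective <| by
    simp only [ofMul_mul, ofMul_pow, ofMul_inv]; abel

private lemma mabel₂ : (a * b) ^ 4 =
    (a * b ^ 2 * c) ^ 3 * ((b * c ^ 2 * d)⁻¹) ^ 2 * (c * d ^ 2 * a) :=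
  Additive.ofMul.injective <| by
    simp only [ofMul_mul, ofMul_pow, ofMul_inv]; abel

private lemma mabel₃ : b⁻¹ * (a * b) = a :=
  Additive.ofMul.injective <| by
    simp only [ofMul_mul, ofMul_inv]; abel

private lemma mabel₄ : b⁻¹ * (a * b) ^ 3 = c * ((a * b) ^ 4 * (a * b ^ 2 * c)⁻¹) :=
  Additive.ofMul.injective <| by
    simp only [ofMul_mul, ofMul_pow, ofMul_inv]; abel

private lemma mabel₅ : b * (a * b) ^ 2 = d * ((a * b ^ 2 * c) ^ 2 * (b * c ^ 2 * d)⁻¹) :=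
  Additive.ofMul.injective <| by
    simp only [ofMul_mul, ofMul_pow, ofMul_inv]; abel

end Identities

/-- The relator word. -/
abbrev w : FreeGroup (ZMod 4) := x 4 * x 1 ^ 3 * x 2 * (x 1)⁻¹

/-- The abelianized group. -/
abbrev A : Type := Abelianization (G 4 w)

/-- The generators of `A`. -/
def α (i : ZMod 4) : A := Abelianization.of (PresentedGroup.of i)

lemma theta_of (n : ℕ) (i : ZMod n) : theta n (FreeGroup.of i) = FreeGroup.of (i + 1) :=
  FreeGroup.lift_apply_of

lemma tw1 : (theta 4 ^ 1) w = x 1 * x 2 ^ 3 * x 3 * (x 2)⁻¹ := by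
  simp only [w, x, pow_one, map_mul, map_pow, map_inv]
  simp only [theta_of, show (4 : ZMod 4) + 1 = 1 by decide, show (1 : ZMod 4) + 1 = 2 by decide,
    show (2 : ZMod 4) + 1 = 3 by decide]

lemma tw2 : (theta 4 ^ 2) w = x 2 * x 3 ^ 3 * x 0 * (x 3)⁻¹ := by
  have : (theta 4 ^ 2) w = theta 4 ((theta 4 ^ 1) w) := by
    rw [Monoid.End.coe_pow, Monoid.End.coe_pow]
    simp [Function.iterate_succ_apply']
  rw [this, tw1]
  simp only [x, map_mul, map_pow, map_inv]
  simp only [theta_of, show (1 : ZMod 4) + 1 = 2 by decide, show (2 : ZMod 4) + 1 = 3 by decide,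
    show (3 : ZMod 4) + 1 = 0 by decide]

lemma tw3 : (theta 4 ^ 3) w = x 3 * x 0 ^ 3 * x 1 * (x 0)⁻¹ := by
  have : (theta 4 ^ 3) w = theta 4 ((theta 4 ^ 2) w) := by
    rw [Monoid.End.coe_pow, Monoid.End.coe_pow]
    simp [Function.iterate_succ_apply']
  rw [this, tw2]
  simp only [x, map_mul, map_pow, map_inv]
  simp only [theta_of, show (2 : ZMod 4) + 1 = 3 by decide, show (3 : ZMod 4) + 1 = 0 by decide,
    show (0 : ZMod 4) + 1 = 1 by decide]

/-- image values of the generators in `ℤ × ZMod 4`. -/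
def fval : ZMod 4 → ℤ × ZMod 4 := fun i =>
  if i = 0 then (-1, 1) else if i = 1 then (1, 0) else if i = 2 then (-1, 3) else (1, 2)

def fmul : ZMod 4 → Multiplicative (ℤ × ZMod 4) := fun i => Multiplicative.ofAdd (fval i)

lemma hrels : ∀ r ∈ cyclicRels 4 w, FreeGroup.lift fmul r = 1 := by
  rintro r ⟨j, hj, rfl⟩
  interval_cases j
  · rw [pow_zero]
    show FreeGroup.lift fmul w = 1
    simp only [w, x, map_mul, map_pow, map_inv, FreeGroup.lift_apply_of]
    decide
  · rw [tw1]
    simp only [x, map_mul, map_pow, map_inv, FreeGroup.lift_apply_of]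
    decide
  · rw [tw2]
    simp only [x, map_mul, map_pow, map_inv, FreeGroup.lift_apply_of]
    decide
  · rw [tw3]
    simp only [x, map_mul, map_pow, map_inv, FreeGroup.lift_apply_of]
    decide

/-- The forward homomorphism. -/
noncomputable def Φ : A →* Multiplicative (ℤ × ZMod 4) :=
  Abelianization.lift (PresentedGroup.toGroup hrels)

lemma Φ_α (i : ZMod 4) : Φ (α i) = fmul i := by
  simp [Φ, α, Abelianization.lift_apply_of, PresentedGroup.toGroup.of]

/- The defining relations in the abelianization. -/
lemma rel_of_mem {r : FreeGroup (ZMod 4)} (hr : r ∈ cyclicRels 4 w) :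
    Abelianization.of (PresentedGroup.mk (cyclicRels 4 w) r) = 1 := by
  have : (PresentedGroup.mk (cyclicRels 4 w) r) = 1 :=
    (QuotientGroup.eq_one_iff _).mpr (Subgroup.subset_normalClosure hr)
  rw [this, map_one]

lemma relα {a b c : ZMod 4} (r : FreeGroup (ZMod 4)) (hr : r ∈ cyclicRels 4 w)
    (hw : r = x a * x b ^ 3 * x c * (x b)⁻¹) : α a * α b ^ 2 * α c = 1 := by
  have h := rel_of_mem hr
  rw [hw] at h
  simp only [x, map_mul, map_pow, map_inv] at h
  rw [← mabel₁ (α a) (α b) (α c)]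
  exact h

lemma h0 : α 0 * α 1 ^ 2 * α 2 = 1 := by
  refine relα w ⟨0, by norm_num, by rw [pow_zero]; rfl⟩ ?_
  have : (4 : ZMod 4) = 0 := by decide
  rw [w, this]

lemma h1 : α 1 * α 2 ^ 2 * α 3 = 1 :=
  relα _ ⟨1, by norm_num, rfl⟩ tw1

lemma h2 : α 2 * α 3 ^ 2 * α 0 = 1 :=
  relα _ ⟨2, by norm_num, rfl⟩ tw2

noncomputable def v : A := α 1
noncomputable def u : A := α 0 * α 1

lemma hu : u ^ 4 = 1 := by
  rw [u, mabel₂ (α 0) (α 1) (α 2) (α 3), h0, h1, h2]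
  simp

/-- The backward homomorphism, additively. -/
noncomputable def ψadd : ℤ × ZMod 4 →+ Additive A :=
  AddMonoidHom.coprod (zmultiplesHom (Additive A) (Additive.ofMul v))
    (ZMod.lift 4 ⟨zmultiplesHom (Additive A) (Additive.ofMul u), by
      show ((4 : ℕ) : ℤ) • Additive.ofMul u = 0
      rw [← ofMul_zpow, zpow_natCast, hu, ofMul_one]⟩)

noncomputable def Ψ : Multiplicative (ℤ × ZMod 4) →* A :=
  AddMonoidHom.toMultiplicativeLeft ψadd

lemma Ψ_apply (n k : ℤ) :
    Ψ (Multiplicative.ofAdd (n, ((k : ZMod 4)))) = v ^ n * u ^ k := by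
  show Additive.toMul (ψadd (n, (k : ZMod 4))) = v ^ n * u ^ k
  rw [ψadd, AddMonoidHom.coprod_apply]
  simp only [zmultiplesHom_apply, ZMod.lift_coe]
  rw [toMul_add]
  simp [toMul_zsmul]

lemma comp1 : Ψ.comp Φ = MonoidHom.id A := by
  apply Abelianization.hom_ext
  apply PresentedGroup.ext
  intro i
  show Ψ (Φ (α i)) = α i
  rw [Φ_α]
  fin_cases i
  · -- i = 0 : fmul 0 = ofAdd (-1, 1)
    show Ψ (fmul 0) = α 0
    have : fmul 0 = Multiplicative.ofAdd ((-1 : ℤ), ((1 : ℤ) : ZMod 4)) := by decide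
    rw [this, Ψ_apply]
    show v ^ (-1 : ℤ) * u ^ (1 : ℤ) = α 0
    rw [v, u]
    simp only [zpow_neg, zpow_one]
    exact mabel₃ (α 0) (α 1)
  · show Ψ (fmul 1) = α 1
    have : fmul 1 = Multiplicative.ofAdd ((1 : ℤ), ((0 : ℤ) : ZMod 4)) := by decide
    rw [this, Ψ_apply]
    show v ^ (1 : ℤ) * u ^ (0 : ℤ) = α 1
    simp [v]
  · show Ψ (fmul 2) = α 2
    have : fmul 2 = Multiplicative.ofAdd ((-1 : ℤ), ((3 : ℤ) : ZMod 4)) := by decide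
    rw [this, Ψ_apply]
    show v ^ (-1 : ℤ) * u ^ (3 : ℤ) = α 2
    rw [v, u]
    simp only [zpow_neg, zpow_one]
    calc (α 1)⁻¹ * (α 0 * α 1) ^ (3 : ℤ)
        = (α 1)⁻¹ * (α 0 * α 1) ^ (3 : ℕ) := by
          rw [show (3 : ℤ) = ((3 : ℕ) : ℤ) by norm_num, zpow_natCast]
      _ = α 2 * ((α 0 * α 1) ^ 4 * (α 0 * α 1 ^ 2 * α 2)⁻¹) := mabel₄ _ _ _
      _ = α 2 := by rw [← u, hu, h0]; simp
  · show Ψ (fmul 3) = α 3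
    have : fmul 3 = Multiplicative.ofAdd ((1 : ℤ), ((2 : ℤ) : ZMod 4)) := by decide
    rw [this, Ψ_apply]
    show v ^ (1 : ℤ) * u ^ (2 : ℤ) = α 3
    rw [v, u]
    calc α 1 ^ (1 : ℤ) * (α 0 * α 1) ^ (2 : ℤ)
        = α 1 * (α 0 * α 1) ^ (2 : ℕ) := by
          rw [show (2 : ℤ) = ((2 : ℕ) : ℤ) by norm_num, zpow_natCast, zpow_one]
      _ = α 3 * ((α 0 * α 1 ^ 2 * α 2) ^ 2 * (α 1 * α 2 ^ 2 * α 3)⁻¹) := mabel₅ _ _ _ _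
      _ = α 3 := by rw [h0, h1]; simp

lemma Φ_v : Φ v = Multiplicative.ofAdd ((1 : ℤ), (0 : ZMod 4)) := by
  rw [v, Φ_α]; decide

lemma Φ_u : Φ u = Multiplicative.ofAdd ((0 : ℤ), (1 : ZMod 4)) := by
  rw [u, map_mul, Φ_α, Φ_α]; decide

lemma comp2 : Φ.comp Ψ = MonoidHom.id (Multiplicative (ℤ × ZMod 4)) := by
  apply MonoidHom.ext
  intro p
  have hp : p = Multiplicative.ofAdd ((Multiplicative.toAdd p).1, (Multiplicative.toAdd p).2) := rfl
  set n := (Multiplicative.toAdd p).1 with hn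
  set m := (Multiplicative.toAdd p).2 with hm
  obtain ⟨k, hk⟩ : ∃ k : ℤ, ((k : ZMod 4)) = m := ⟨(m.val : ℤ), by
    push_cast
    simp [ZMod.natCast_val, ZMod.cast_id]⟩
  show (Φ.comp Ψ) p = p
  rw [hp]
  show Φ (Ψ (Multiplicative.ofAdd (n, m))) = Multiplicative.ofAdd (n, m)
  rw [← hk, Ψ_apply, map_mul, map_zpow, map_zpow, Φ_v, Φ_u]
  rw [← ofAdd_zsmul, ← ofAdd_zsmul, ← ofAdd_add]
  congr 1
  simp [Prod.ext_iff]

/-- The isomorphism. -/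
noncomputable def theEquiv : A ≃* Multiplicative (ℤ × ZMod 4) :=
  MonoidHom.toMulEquiv Φ Ψ comp1 comp2

end Aux

/-- The abelianization of `G₄(x₄x₁³x₂x₁⁻¹)` (the first homology of the corresponding
4-fold strongly-cyclic branched covering) is `ℤ × ℤ_4`. -/
theorem stmt14 :
    Nonempty (Abelianization (G 4 (x 4 * x 1 ^ 3 * x 2 * (x 1)⁻¹)) ≃*
      Multiplicative (ℤ × ZMod 4)) := by
  exact ⟨Aux.theEquiv⟩

end Stmt14
end
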